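/- For any matrix A ∈ ℝ^{n×n}, any positive vector η ∈ ℝ^n_{>0}, and any p ∈ [1,∞], the diagonally-weighted logarithmic norm satisfies μ_{p,[η]}(A) ≤ μ_{p,[η]}(⌈A⌉_Mzr), with equality when p ∈ {1,∞}. -/

import Mathlib

open Finset

/-- Metzler majorant. -/
def mzr {n : ℕ} (A : Matrix (Fin n) (Fin n) ℝ) : Matrix (Fin n) (Fin n) ℝ :=
  fun i j => if i = j then A i j else |A i j|

/-- Diagonally weighted ℓ_p norm, `p ∈ [1,∞]`: `‖x‖_{p,[η]} = ‖[η]x‖_p`. -/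
noncomputable def wnormP {n : ℕ} (p : ENNReal) (η : Fin n → ℝ) (x : Fin n → ℝ) : ℝ :=
  if p = ⊤ then ⨆ i, η i * |x i|
  else (∑ i, (η i * |x i|) ^ p.toReal) ^ (1 / p.toReal)

/-- Operator norm induced by the weighted ℓ_p norm. -/
noncomputable def opNormP {n : ℕ} (p : ENNReal) (η : Fin n → ℝ)
    (A : Matrix (Fin n) (Fin n) ℝ) : ℝ :=
  sSup {c : ℝ | ∃ x : Fin n → ℝ, wnormP p η x = 1 ∧ c = wnormP p η (A.mulVec x)}

section helpers

variable {n : ℕ} {p : ENNReal} {η : Fin n → ℝ}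

private lemma mv (C : Matrix (Fin n) (Fin n) ℝ) (x : Fin n → ℝ) (i : Fin n) :
    C.mulVec x i = ∑ j, C i j * x j := rfl

private lemma my_toReal_pos (hp : 1 ≤ p) (hpt : p ≠ ⊤) : 0 < p.toReal :=
  ENNReal.toReal_pos (by rintro rfl; simp at hp) hpt

private lemma wnorm_mono (hη : ∀ i, 0 < η i) {x y : Fin n → ℝ}
    (h : ∀ i, |x i| ≤ |y i|) : wnormP p η x ≤ wnormP p η y := by
  unfold wnormP
  split
  · exact ciSup_mono (Set.finite_range _).bddAbove
      (fun i => mul_le_mul_of_nonneg_left (h i) (hη i).le)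
  · refine Real.rpow_le_rpow
      (Finset.sum_nonneg fun i _ => Real.rpow_nonneg (mul_nonneg (hη i).le (abs_nonneg _)) _)
      (Finset.sum_le_sum fun i _ => Real.rpow_le_rpow (mul_nonneg (hη i).le (abs_nonneg _))
        (mul_le_mul_of_nonneg_left (h i) (hη i).le) ENNReal.toReal_nonneg)
      (one_div_nonneg.mpr ENNReal.toReal_nonneg)

private lemma wnorm_congr (hη : ∀ i, 0 < η i) {x y : Fin n → ℝ}
    (h : ∀ i, |x i| = |y i|) : wnormP p η x = wnormP p η y :=
  le_antisymm (wnorm_mono hη fun i => (h i).le) (wnorm_mono hη fun i => (h i).ge)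

private lemma wnorm_abs (hη : ∀ i, 0 < η i) (x : Fin n → ℝ) :
    wnormP p η (fun i => |x i|) = wnormP p η x :=
  wnorm_congr hη fun i => abs_abs (x i)

private lemma entry_le (hp : 1 ≤ p) (hη : ∀ i, 0 < η i) {x : Fin n → ℝ}
    (hx : wnormP p η x = 1) (j : Fin n) : η j * |x j| ≤ 1 := by
  unfold wnormP at hx
  by_cases hpt : p = ⊤
  · rw [if_pos hpt] at hx
    calc η j * |x j| ≤ ⨆ i, η i * |x i| :=
          le_ciSup (f := fun i => η i * |x i|) (Set.finite_range _).bddAbove j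
      _ = 1 := hx
  · rw [if_neg hpt] at hx
    have hr0 : 0 < p.toReal := my_toReal_pos hp hpt
    have hS : 0 ≤ ∑ i, (η i * |x i|) ^ p.toReal :=
      Finset.sum_nonneg fun i _ => Real.rpow_nonneg (mul_nonneg (hη i).le (abs_nonneg _)) _
    have hsum : ∑ i, (η i * |x i|) ^ p.toReal = 1 := by
      have h2 : ((∑ i, (η i * |x i|) ^ p.toReal) ^ (1 / p.toReal)) ^ p.toReal = 1 := by
        rw [hx, Real.one_rpow]
      rwa [← Real.rpow_mul hS, one_div, inv_mul_cancel₀ hr0.ne', Real.rpow_one] at h2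
    have hterm : (η j * |x j|) ^ p.toReal ≤ 1 := by
      rw [← hsum]
      exact Finset.single_le_sum
        (fun i _ => Real.rpow_nonneg (mul_nonneg (hη i).le (abs_nonneg _)) _)
        (Finset.mem_univ j)
    have h0 : 0 ≤ η j * |x j| := mul_nonneg (hη j).le (abs_nonneg _)
    calc η j * |x j| = ((η j * |x j|) ^ p.toReal) ^ (1 / p.toReal) := by
          rw [← Real.rpow_mul h0, mul_one_div, div_self hr0.ne', Real.rpow_one]
      _ ≤ 1 ^ (1 / p.toReal) := Real.rpow_le_rpow (Real.rpow_nonneg h0 _) hterm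
          (one_div_nonneg.mpr ENNReal.toReal_nonneg)
      _ = 1 := Real.one_rpow _

private lemma abs_le_inv (hp : 1 ≤ p) (hη : ∀ i, 0 < η i) {x : Fin n → ℝ}
    (hx : wnormP p η x = 1) (j : Fin n) : |x j| ≤ (η j)⁻¹ := by
  have h := entry_le hp hη hx j
  calc |x j| = (η j * |x j|) * (η j)⁻¹ := by
        rw [mul_comm (η j), mul_assoc, mul_inv_cancel₀ (hη j).ne', mul_one]
    _ ≤ 1 * (η j)⁻¹ := mul_le_mul_of_nonneg_right h (inv_nonneg.mpr (hη j).le)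
    _ = (η j)⁻¹ := one_mul _

private lemma wnorm_single (hp : 1 ≤ p) (hη : ∀ i, 0 < η i) (j : Fin n) :
    wnormP p η (Pi.single j (η j)⁻¹) = 1 := by
  have : Nonempty (Fin n) := ⟨j⟩
  have hval : ∀ i, η i * |(Pi.single j (η j)⁻¹ : Fin n → ℝ) i| = if i = j then 1 else 0 := by
    intro i
    rcases eq_or_ne i j with rfl | hij
    · simp [Pi.single_apply, abs_of_pos (inv_pos.mpr (hη i)), mul_inv_cancel₀ (hη i).ne']
    · simp [Pi.single_apply, hij]
  unfold wnormP
  by_cases hpt : p = ⊤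
  · rw [if_pos hpt]
    apply le_antisymm
    · exact ciSup_le fun i => by rw [hval i]; split <;> norm_num
    · calc (1:ℝ) = η j * |(Pi.single j (η j)⁻¹ : Fin n → ℝ) j| := by rw [hval j]; simp
        _ ≤ _ := le_ciSup (f := fun i => η i * |(Pi.single j (η j)⁻¹ : Fin n → ℝ) i|)
            (Set.finite_range _).bddAbove j
  · rw [if_neg hpt]
    have hr0 : 0 < p.toReal := my_toReal_pos hp hpt
    have hterm : ∀ i, (η i * |(Pi.single j (η j)⁻¹ : Fin n → ℝ) i|) ^ p.toReal
        = if i = j then 1 else 0 := by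
      intro i; rw [hval i]; split
      · exact Real.one_rpow _
      · exact Real.zero_rpow hr0.ne'
    rw [Finset.sum_congr rfl fun i _ => hterm i,
      Finset.sum_ite_eq' Finset.univ j fun _ => (1:ℝ)]
    simp

private lemma wnorm_ne_one (hp : 1 ≤ p) (he : IsEmpty (Fin n)) (x : Fin n → ℝ) :
    wnormP p η x ≠ 1 := by
  unfold wnormP
  by_cases hpt : p = ⊤
  · rw [if_pos hpt, Real.iSup_of_isEmpty]; norm_num
  · rw [if_neg hpt, Finset.univ_eq_empty, Finset.sum_empty,
      Real.zero_rpow (one_div_ne_zero (my_toReal_pos hp hpt).ne')]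
    norm_num

private lemma bddAbove_S (hp : 1 ≤ p) (hη : ∀ i, 0 < η i) (C : Matrix (Fin n) (Fin n) ℝ) :
    BddAbove {c : ℝ | ∃ x : Fin n → ℝ, wnormP p η x = 1 ∧ c = wnormP p η (C.mulVec x)} := by
  refine ⟨wnormP p η (fun i => ∑ j, |C i j| * (η j)⁻¹), ?_⟩
  rintro c ⟨x, hx, rfl⟩
  apply wnorm_mono hη
  intro i
  show |C.mulVec x i| ≤ |∑ j, |C i j| * (η j)⁻¹|
  rw [mv]
  calc |∑ j, C i j * x j| ≤ ∑ j, |C i j * x j| :=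
        Finset.abs_sum_le_sum_abs (fun j => C i j * x j) Finset.univ
    _ ≤ ∑ j, |C i j| * (η j)⁻¹ := Finset.sum_le_sum fun j _ => by
        rw [abs_mul]
        exact mul_le_mul_of_nonneg_left (abs_le_inv hp hη hx j) (abs_nonneg _)
    _ ≤ |∑ j, |C i j| * (η j)⁻¹| := le_abs_self _

private lemma opNorm_of_isEmpty (hp : 1 ≤ p) (he : IsEmpty (Fin n))
    (C : Matrix (Fin n) (Fin n) ℝ) : opNormP p η C = 0 := by
  unfold opNormP
  rw [show {c : ℝ | ∃ x : Fin n → ℝ, wnormP p η x = 1 ∧ c = wnormP p η (C.mulVec x)} = ∅ from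
    Set.eq_empty_iff_forall_notMem.mpr (by rintro c ⟨x, hx, _⟩; exact wnorm_ne_one hp he x hx)]
  exact Real.sSup_empty

private lemma opNorm_le_opNorm (hp : 1 ≤ p) (hη : ∀ i, 0 < η i)
    {B M : Matrix (Fin n) (Fin n) ℝ} (hBM : ∀ i j, |B i j| = M i j) :
    opNormP p η B ≤ opNormP p η M := by
  rcases isEmpty_or_nonempty (Fin n) with he | hne
  · rw [opNorm_of_isEmpty hp he, opNorm_of_isEmpty hp he]
  · obtain ⟨j0⟩ := id hne
    unfold opNormP
    have hneB : Set.Nonempty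
        {c : ℝ | ∃ x : Fin n → ℝ, wnormP p η x = 1 ∧ c = wnormP p η (B.mulVec x)} :=
      ⟨_, Pi.single j0 (η j0)⁻¹, wnorm_single hp hη j0, rfl⟩
    refine csSup_le hneB ?_
    rintro c ⟨x, hx, rfl⟩
    set u : Fin n → ℝ := fun i => |x i| with hudef
    have hu : wnormP p η u = 1 := (wnorm_abs hη x).trans hx
    have key : wnormP p η (B.mulVec x) ≤ wnormP p η (M.mulVec u) := by
      apply wnorm_mono hη
      intro i
      show |B.mulVec x i| ≤ |M.mulVec u i|
      rw [mv, mv]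
      calc |∑ j, B i j * x j| ≤ ∑ j, |B i j * x j| :=
            Finset.abs_sum_le_sum_abs (fun j => B i j * x j) Finset.univ
        _ = ∑ j, M i j * u j := Finset.sum_congr rfl fun j _ => by
            rw [abs_mul, hBM]
        _ ≤ |∑ j, M i j * u j| := le_abs_self _
    exact key.trans (le_csSup (bddAbove_S hp hη M) ⟨u, hu, rfl⟩)

private lemma opNorm_ge_top (hη : ∀ i, 0 < η i)
    {B M : Matrix (Fin n) (Fin n) ℝ} (hBM : ∀ i j, |B i j| = M i j) :
    opNormP ⊤ η M ≤ opNormP ⊤ η B := by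
  rcases isEmpty_or_nonempty (Fin n) with he | hne
  · rw [opNorm_of_isEmpty le_top he, opNorm_of_isEmpty le_top he]
  · obtain ⟨j0⟩ := id hne
    unfold opNormP
    have hneM : Set.Nonempty
        {c : ℝ | ∃ x : Fin n → ℝ, wnormP ⊤ η x = 1 ∧ c = wnormP ⊤ η (M.mulVec x)} :=
      ⟨_, Pi.single j0 (η j0)⁻¹, wnorm_single le_top hη j0, rfl⟩
    refine csSup_le hneM ?_
    rintro c ⟨x, hx, rfl⟩
    set u : Fin n → ℝ := fun i => |x i| with hudef
    have hu : wnormP ⊤ η u = 1 := (wnorm_abs hη x).trans hx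
    have hMnn : ∀ i j, 0 ≤ M i j := fun i j => hBM i j ▸ abs_nonneg _
    have hMu : ∀ i, 0 ≤ M.mulVec u i := by
      intro i
      rw [mv]
      exact Finset.sum_nonneg fun j _ => mul_nonneg (hMnn i j) (abs_nonneg _)
    have step1 : wnormP ⊤ η (M.mulVec x) ≤ wnormP ⊤ η (M.mulVec u) := by
      apply wnorm_mono hη
      intro i
      show |M.mulVec x i| ≤ |M.mulVec u i|
      rw [mv, mv]
      calc |∑ j, M i j * x j| ≤ ∑ j, |M i j * x j| :=
            Finset.abs_sum_le_sum_abs (fun j => M i j * x j) Finset.univ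
        _ = ∑ j, M i j * u j := Finset.sum_congr rfl fun j _ => by
            rw [abs_mul, abs_of_nonneg (hMnn i j)]
        _ ≤ |∑ j, M i j * u j| := le_abs_self _
    obtain ⟨i₀, hi₀⟩ := Finite.exists_max (fun i => η i * |M.mulVec u i|)
    have hsup : wnormP ⊤ η (M.mulVec u) = η i₀ * |M.mulVec u i₀| := by
      unfold wnormP
      rw [if_pos rfl]
      exact le_antisymm (ciSup_le hi₀)
        (le_ciSup (f := fun i => η i * |M.mulVec u i|) (Set.finite_range _).bddAbove i₀)
    set y : Fin n → ℝ := fun j => if 0 ≤ B i₀ j then u j else -u j with hydef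
    have hy : wnormP ⊤ η y = 1 := by
      rw [← hu]
      apply wnorm_congr hη
      intro i
      simp only [hydef]
      split <;> simp
    have hBy : B.mulVec y i₀ = M.mulVec u i₀ := by
      rw [mv, mv]
      refine Finset.sum_congr rfl fun j _ => ?_
      simp only [hydef]
      rw [← hBM]
      rcases le_or_gt 0 (B i₀ j) with h | h
      · rw [if_pos h, abs_of_nonneg h]
      · rw [if_neg (not_le.mpr h), abs_of_neg h]; ring
    have final : wnormP ⊤ η (M.mulVec u) ≤ wnormP ⊤ η (B.mulVec y) := by
      rw [hsup]
      calc η i₀ * |M.mulVec u i₀| = η i₀ * |B.mulVec y i₀| := by rw [hBy]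
        _ ≤ ⨆ i, η i * |B.mulVec y i| :=
            le_ciSup (f := fun i => η i * |B.mulVec y i|) (Set.finite_range _).bddAbove i₀
        _ = wnormP ⊤ η (B.mulVec y) := by unfold wnormP; rw [if_pos rfl]
    exact (step1.trans final).trans (le_csSup (bddAbove_S le_top hη B) ⟨y, hy, rfl⟩)

private lemma wnorm_one_eq (x : Fin n → ℝ) : wnormP 1 η x = ∑ i, η i * |x i| := by
  unfold wnormP
  rw [if_neg (by simp), ENNReal.toReal_one]
  simp [Real.rpow_one]

private lemma opNorm_ge_one (hη : ∀ i, 0 < η i)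
    {B M : Matrix (Fin n) (Fin n) ℝ} (hBM : ∀ i j, |B i j| = M i j) :
    opNormP 1 η M ≤ opNormP 1 η B := by
  rcases isEmpty_or_nonempty (Fin n) with he | hne
  · rw [opNorm_of_isEmpty le_rfl he, opNorm_of_isEmpty le_rfl he]
  · obtain ⟨j0⟩ := id hne
    unfold opNormP
    have hneM : Set.Nonempty
        {c : ℝ | ∃ x : Fin n → ℝ, wnormP 1 η x = 1 ∧ c = wnormP 1 η (M.mulVec x)} :=
      ⟨_, Pi.single j0 (η j0)⁻¹, wnorm_single le_rfl hη j0, rfl⟩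
    refine csSup_le hneM ?_
    rintro c ⟨x, hx, rfl⟩
    set u : Fin n → ℝ := fun i => |x i| with hudef
    have hunn : ∀ i, (0:ℝ) ≤ u i := fun i => abs_nonneg _
    have hu : wnormP 1 η u = 1 := (wnorm_abs hη x).trans hx
    have hMnn : ∀ i j, 0 ≤ M i j := fun i j => hBM i j ▸ abs_nonneg _
    have hMu : ∀ i, 0 ≤ M.mulVec u i := by
      intro i
      rw [mv]
      exact Finset.sum_nonneg fun j _ => mul_nonneg (hMnn i j) (hunn j)
    have step1 : wnormP 1 η (M.mulVec x) ≤ wnormP 1 η (M.mulVec u) := by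
      apply wnorm_mono hη
      intro i
      show |M.mulVec x i| ≤ |M.mulVec u i|
      rw [mv, mv]
      calc |∑ j, M i j * x j| ≤ ∑ j, |M i j * x j| :=
            Finset.abs_sum_le_sum_abs (fun j => M i j * x j) Finset.univ
        _ = ∑ j, M i j * u j := Finset.sum_congr rfl fun j _ => by
            rw [abs_mul, abs_of_nonneg (hMnn i j)]
        _ ≤ |∑ j, M i j * u j| := le_abs_self _
    have hsum : ∑ j, η j * u j = 1 := by
      rw [← hu, wnorm_one_eq]
      exact Finset.sum_congr rfl fun j _ => by rw [abs_of_nonneg (hunn j)]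
    set g : Fin n → ℝ := fun j => (∑ i, η i * M i j) * (η j)⁻¹ with hgdef
    obtain ⟨j₀, hj₀⟩ := Finite.exists_max g
    have step2 : wnormP 1 η (M.mulVec u) ≤ g j₀ := by
      rw [wnorm_one_eq]
      have e0 : ∀ i, η i * |M.mulVec u i| = ∑ j, η i * (M i j * u j) := by
        intro i
        rw [abs_of_nonneg (hMu i), mv, Finset.mul_sum]
      have e2 : ∀ j, g j * (η j * u j) = ∑ i, η i * (M i j * u j) := by
        intro j
        have e3 : g j * (η j * u j) = (∑ i, η i * M i j) * u j := by
          simp only [hgdef]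
          calc (∑ i, η i * M i j) * (η j)⁻¹ * (η j * u j)
              = (∑ i, η i * M i j) * u j * ((η j)⁻¹ * η j) := by ring
            _ = (∑ i, η i * M i j) * u j := by rw [inv_mul_cancel₀ (hη j).ne', mul_one]
        rw [e3, Finset.sum_mul]
        exact Finset.sum_congr rfl fun i _ => by ring
      calc ∑ i, η i * |M.mulVec u i| = ∑ i, ∑ j, η i * (M i j * u j) :=
            Finset.sum_congr rfl fun i _ => e0 i
        _ = ∑ j, ∑ i, η i * (M i j * u j) := Finset.sum_comm
        _ = ∑ j, g j * (η j * u j) := Finset.sum_congr rfl fun j _ => (e2 j).symm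
        _ ≤ ∑ j, g j₀ * (η j * u j) := Finset.sum_le_sum fun j _ =>
            mul_le_mul_of_nonneg_right (hj₀ j) (mul_nonneg (hη j).le (hunn j))
        _ = g j₀ * ∑ j, η j * u j := by rw [Finset.mul_sum]
        _ = g j₀ := by rw [hsum, mul_one]
    have hBy : wnormP 1 η (B.mulVec (Pi.single j₀ (η j₀)⁻¹)) = g j₀ := by
      rw [wnorm_one_eq, Matrix.mulVec_single]
      simp only [hgdef]
      rw [Finset.sum_mul]
      refine Finset.sum_congr rfl fun i _ => ?_
      show η i * |B i j₀ * (η j₀)⁻¹| = _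
      rw [abs_mul, hBM, abs_of_pos (inv_pos.mpr (hη j₀))]
      ring
    refine (step1.trans step2).trans ?_
    rw [← hBy]
    exact le_csSup (bddAbove_S le_rfl hη B) ⟨_, wnorm_single le_rfl hη j₀, rfl⟩

end helpers

/-- If `μ_{p,[η]}(A)` and `μ_{p,[η]}(⌈A⌉_Mzr)` are the logarithmic norms (one-sided
limits `a` and `b` below), then `μ_{p,[η]}(A) ≤ μ_{p,[η]}(⌈A⌉_Mzr)`, with
equality whenever `p ∈ {1, ∞}`. -/
theorem mu_le_mu_mzr {n : ℕ} (p : ENNReal) (hp : 1 ≤ p) (η : Fin n → ℝ)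
    (hη : ∀ i, 0 < η i) (A : Matrix (Fin n) (Fin n) ℝ) (a b : ℝ)
    (ha : Filter.Tendsto (fun h : ℝ => (opNormP p η (1 + h • A) - 1) / h)
      (nhdsWithin 0 (Set.Ioi 0)) (nhds a))
    (hb : Filter.Tendsto (fun h : ℝ => (opNormP p η (1 + h • mzr A) - 1) / h)
      (nhdsWithin 0 (Set.Ioi 0)) (nhds b)) :
    a ≤ b ∧ ((p = 1 ∨ p = ⊤) → a = b) := by
  set δ : ℝ := (1 + ∑ i, |A i i|)⁻¹ with hδdef
  have hSnn : (0:ℝ) ≤ ∑ i, |A i i| := Finset.sum_nonneg fun i _ => abs_nonneg _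
  have hδpos : 0 < δ := by positivity
  have key : ∀ h : ℝ, h ∈ Set.Ioo 0 δ → ∀ i j, |(1 + h • A) i j| = (1 + h • mzr A) i j := by
    intro h hh i j
    have h0 : 0 < h := hh.1
    have hdiag : 0 ≤ 1 + h * A i i := by
      have h1 : h * |A i i| < 1 := by
        have h2 : |A i i| ≤ 1 + ∑ i, |A i i| := by
          have := Finset.single_le_sum (f := fun i => |A i i|)
            (fun i _ => abs_nonneg _) (Finset.mem_univ i)
          linarith
        calc h * |A i i| ≤ h * (1 + ∑ i, |A i i|) := mul_le_mul_of_nonneg_left h2 h0.le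
          _ < δ * (1 + ∑ i, |A i i|) := by
              apply mul_lt_mul_of_pos_right hh.2
              positivity
          _ = 1 := by
              rw [hδdef]
              field_simp
      have h3 := neg_abs_le (A i i)
      nlinarith [abs_nonneg (A i i)]
    rcases eq_or_ne i j with rfl | hij
    · show |(1 + h • A) i i| = (1 + h • mzr A) i i
      simp only [Matrix.add_apply, Matrix.one_apply_eq, Matrix.smul_apply, smul_eq_mul, mzr,
        if_pos rfl]
      exact abs_of_nonneg hdiag
    · simp only [Matrix.add_apply, Matrix.one_apply_ne hij, Matrix.smul_apply, smul_eq_mul, mzr,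
        if_neg hij, zero_add]
      rw [abs_mul, abs_of_pos h0]
  have hle : ∀ h ∈ Set.Ioo 0 δ, opNormP p η (1 + h • A) ≤ opNormP p η (1 + h • mzr A) :=
    fun h hh => opNorm_le_opNorm hp hη (key h hh)
  have hmem : Set.Ioo (0:ℝ) δ ∈ nhdsWithin 0 (Set.Ioi 0) :=
    Ioo_mem_nhdsGT_of_mem (Set.left_mem_Ico.mpr hδpos)
  have hev : ∀ᶠ h in nhdsWithin (0:ℝ) (Set.Ioi 0),
      (opNormP p η (1 + h • A) - 1) / h ≤ (opNormP p η (1 + h • mzr A) - 1) / h := by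
    filter_upwards [hmem] with h hh
    exact (div_le_div_iff_of_pos_right hh.1).mpr (by linarith [hle h hh])
  refine ⟨le_of_tendsto_of_tendsto ha hb hev, ?_⟩
  intro hp1
  have heq : (fun h : ℝ => (opNormP p η (1 + h • A) - 1) / h) =ᶠ[nhdsWithin 0 (Set.Ioi 0)]
      (fun h : ℝ => (opNormP p η (1 + h • mzr A) - 1) / h) := by
    filter_upwards [hmem] with h hh
    have hge : opNormP p η (1 + h • mzr A) ≤ opNormP p η (1 + h • A) := by
      rcases hp1 with rfl | rfl
      · exact opNorm_ge_one hη (key h hh)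
      · exact opNorm_ge_top hη (key h hh)
    rw [le_antisymm (hle h hh) hge]
  exact tendsto_nhds_unique (Filter.Tendsto.congr' heq ha) hb
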